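/- Let m_i, m_j be positive integers and d₁ = m_i + m_j. For λ ∈ ℂ*, the degree-d₁ cover π(z₀:z₁) = ((z₀−z₁)^{d₁} : λ z₀^{m_j} z₁^{m_i}) of ℙ¹ has the property that the equation π(z₀:z₁) = (d₁^{d₁} : (−1)^{m_i} m_j^{m_j} m_i^{m_i} λ) has a double root at (m_j : −m_i). -/

import Mathlib

open Polynomial

/-- For the degree-`d₁ = m_i + m_j` cover `π(z₀:z₁) = ((z₀−z₁)^{d₁} : λ z₀^{m_j} z₁^{m_i})`,
the equation `π(z₀:z₁) = (d₁^{d₁} : (−1)^{m_i} m_j^{m_j} m_i^{m_i} λ)` has a double root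
at `(m_j : −m_i)`: the (dehomogenized at `z₁ = 1`) polynomial
`(−1)^{m_i} m_j^{m_j} m_i^{m_i} λ (z₀−1)^{d₁} − d₁^{d₁} λ z₀^{m_j}` is divisible by
`(m_i z₀ + m_j)²`. -/
theorem stmt10 (mi mj : ℕ) (hi : 0 < mi) (hj : 0 < mj) (lam : ℂ) (hlam : lam ≠ 0) :
    (C ((mi : ℂ)) * X + C ((mj : ℂ))) ^ 2 ∣
      C ((-1 : ℂ) ^ mi * (mj : ℂ) ^ mj * (mi : ℂ) ^ mi * lam) * (X - 1) ^ (mi + mj) -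
        C (((mi + mj : ℕ) : ℂ) ^ (mi + mj) * lam) * X ^ mj := by
  obtain ⟨i, rfl⟩ : ∃ i, mi = i + 1 := ⟨mi - 1, (Nat.succ_pred_eq_of_pos hi).symm⟩
  obtain ⟨j, rfl⟩ : ∃ j, mj = j + 1 := ⟨mj - 1, (Nat.succ_pred_eq_of_pos hj).symm⟩
  set a : ℂ := ((i + 1 : ℕ) : ℂ) with ha
  set b : ℂ := ((j + 1 : ℕ) : ℂ) with hb
  have ha0 : a ≠ 0 := by exact_mod_cast Nat.cast_ne_zero.mpr (Nat.succ_ne_zero i)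
  have hb0 : b ≠ 0 := by exact_mod_cast Nat.cast_ne_zero.mpr (Nat.succ_ne_zero j)
  set r : ℂ := -b / a with hr
  set p : ℂ[X] := C ((-1 : ℂ) ^ (i+1) * b ^ (j+1) * a ^ (i+1) * lam) * (X - 1) ^ ((i+1) + (j+1)) -
    C ((((i+1) + (j+1) : ℕ) : ℂ) ^ ((i+1) + (j+1)) * lam) * X ^ (j+1) with hp
  have hr1 : r - 1 = -(a + b) / a := by rw [hr]; field_simp; ring
  have hab : ((i + 1 + (j + 1) : ℕ) : ℂ) = a + b := by push_cast [ha, hb]; ring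
  have hab0 : a + b ≠ 0 := by
    rw [← hab]; exact Nat.cast_ne_zero.mpr (by omega)
  have hcoeff : p.coeff (i + 1 + (j + 1)) = (-1 : ℂ) ^ (i+1) * b ^ (j+1) * a ^ (i+1) * lam := by
    have hm := ((monic_X_sub_C (1:ℂ)).pow (i + 1 + (j + 1))).coeff_natDegree
    rw [natDegree_pow, natDegree_X_sub_C, mul_one] at hm
    rw [hp, coeff_sub, coeff_C_mul, coeff_C_mul, coeff_X_pow]
    simp only [map_one] at hm ⊢
    rw [hm]
    simp [Nat.succ_ne_zero]
  have hne : p ≠ 0 := by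
    intro h0
    rw [h0, coeff_zero] at hcoeff
    exact (mul_ne_zero (mul_ne_zero (mul_ne_zero (pow_ne_zero _ (by norm_num)) (pow_ne_zero _ hb0)) (pow_ne_zero _ ha0)) hlam) hcoeff.symm
  have es1 : (-1:ℂ) ^ (i+1) = -(-1:ℂ) ^ i := by rw [pow_succ]; ring
  have esd : (-1:ℂ) ^ (i + 1 + (j + 1)) = (-1:ℂ) ^ i * (-1:ℂ) ^ j := by
    have : i + 1 + (j + 1) = (i + j) + 2 := by ring
    rw [this, pow_add, pow_add]; norm_num
  have esj : (-1:ℂ) ^ (j+1) = -(-1:ℂ) ^ j := by rw [pow_succ]; ring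
  have esd2 : (-1:ℂ) ^ (i + j + 1) = -((-1:ℂ) ^ i * (-1:ℂ) ^ j) := by
    rw [pow_succ, pow_add]; ring
  have hone : (-1:ℂ) ^ (i * 2) = 1 := by
    rw [mul_comm, pow_mul]; norm_num
  have key : (X - C r) ^ 2 ∣ p := by
    rw [← le_rootMultiplicity_iff hne]
    have h12 : (2:ℕ) = 1 + 1 := rfl
    rw [h12, ← Nat.lt_iff_add_one_le]
    refine (one_lt_rootMultiplicity_iff_isRoot hne).mpr ⟨?_, ?_⟩
    · show p.eval r = 0
      rw [hp]
      simp only [eval_sub, eval_mul, eval_pow, eval_C, eval_X, eval_one]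
      rw [hab, hr1, hr, div_pow, div_pow, neg_pow b, neg_pow (a+b)]
      field_simp
      rw [es1, esd, esj]
      field_simp
      ring_nf
      rw [hone]
      ring
    · show (derivative p).eval r = 0
      rw [hp]
      simp only [derivative_sub, derivative_C_mul, derivative_pow, derivative_sub, derivative_X,
        derivative_one, Nat.cast_ofNat, mul_one, sub_zero]
      simp only [eval_sub, eval_mul, eval_pow, eval_C, eval_X, eval_one, eval_natCast]
      have e1 : i + 1 + (j + 1) - 1 = i + j + 1 := by omega
      have e2 : j + 1 - 1 = j := by omega
      rw [e1, e2, hab, hr1, hr, div_pow, div_pow, neg_pow b, neg_pow (a+b)]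
      rw [show ((j + 1 : ℕ) : ℂ) = b from hb.symm]
      field_simp
      rw [es1, esd2]
      field_simp
      ring_nf
      rw [hone]
      ring
  have hlin : C a * X + C b = C a * (X - C r) := by
    have h1 : a * r = -b := by rw [hr]; field_simp
    rw [mul_sub, ← C_mul, h1, C_neg, sub_neg_eq_add]
  rw [hlin, mul_pow, ← C_pow]
  exact (isUnit_C.mpr ((isUnit_iff_ne_zero).mpr (pow_ne_zero 2 ha0))).mul_left_dvd.mpr key
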